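/- Let n > 1 have prime factorization n = p_1^{a_1}···p_k^{a_k}, let τ(n) be the number of divisors of n, let A be the adjacency matrix of the modified divisor prime graph G*_Dp(n), and let B be the positive semidefinite matrix with B² = (A − (1/τ(n))I)². For x ∈ {1,2} set λ_x^{(i)} = (1 + (−1)^{x−1}√(4a_i+1))/2, and for a divisor v of n set w_{v,x}^{(i)} = ((−1)^{x−1}/√(4a_i+1))·λ_x^{(i)} if p_i does not divide v, and w_{v,x}^{(i)} = ((−1)^{x−1}/√(4a_i+1))·(λ_x^{(i)})^{-1} if p_i divides v. Then for every divisor v of n, the diagonal entry of B at v equals (1/τ(n))·(1 − Σ_{x ∈ {1,2}^k} Π_{i=1}^k w_{v,x_i}^{(i)}) + Σ_{x ∈ {1,2}^k} |Π_{i=1}^k λ_{x_i}^{(i)} − 1/τ(n)| · Π_{i=1}^k w_{v,x_i}^{(i)}. -/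

import Mathlib

/-- `λ_x^{(i)} = (1 + (-1)^{x-1} √(4 aᵢ + 1)) / 2`, where the index `x ∈ {1, 2}` is
encoded by a `Bool` (`true` for `x = 1`, `false` for `x = 2`) and `ai` is the exponent
of the `i`-th prime. -/
noncomputable def lamMDP (ai : ℕ) (x : Bool) : ℝ :=
  (1 + (if x then 1 else -1) * Real.sqrt (4 * (ai : ℝ) + 1)) / 2

/-- The weight `w_{v,x}^{(i)} = ((-1)^{x-1} / √(4 aᵢ + 1)) · λ_x^{(i)}` if `pᵢ ∤ v`,
and `((-1)^{x-1} / √(4 aᵢ + 1)) · (λ_x^{(i)})⁻¹` if `pᵢ ∣ v`; the proposition `pdvd`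
encodes `pᵢ ∣ v`. -/
noncomputable def wMDP (ai : ℕ) (x : Bool) (pdvd : Prop) [Decidable pdvd] : ℝ :=
  ((if x then 1 else -1) / Real.sqrt (4 * (ai : ℝ) + 1)) *
    (if pdvd then (lamMDP ai x)⁻¹ else lamMDP ai x)

noncomputable def nuMDP (a : ℕ) (x : Bool) : ℝ := lamMDP a x * (2 * lamMDP a x - 1)

section Scalar
variable {a : ℕ}

lemma rMDP_sq (a : ℕ) : Real.sqrt (4 * (a:ℝ) + 1) ^ 2 = 4 * (a:ℝ) + 1 :=
  Real.sq_sqrt (by positivity)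

lemma one_lt_rMDP (ha : 1 ≤ a) : 1 < Real.sqrt (4 * (a:ℝ) + 1) := by
  have h := rMDP_sq a
  have ha' : (1:ℝ) ≤ a := Nat.one_le_cast.mpr ha
  nlinarith [Real.sqrt_nonneg (4 * (a:ℝ) + 1)]

lemma rMDP_ne (ha : 1 ≤ a) : Real.sqrt (4 * (a:ℝ) + 1) ≠ 0 := by
  have := one_lt_rMDP ha; linarith

lemma lamMDP_sq (a : ℕ) (x : Bool) : lamMDP a x ^ 2 = lamMDP a x + a := by
  cases x <;> simp only [lamMDP, if_true, if_false, Bool.false_eq_true] <;>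
    linear_combination (rMDP_sq a) / 4

lemma nuMDP_eq (a : ℕ) (x : Bool) : nuMDP a x = lamMDP a x + 2 * a := by
  unfold nuMDP; linear_combination 2 * lamMDP_sq a x

lemma nuMDP_pos (ha : 1 ≤ a) (x : Bool) : 0 < nuMDP a x := by
  have h1 := one_lt_rMDP ha
  have ha' : (1:ℝ) ≤ a := Nat.one_le_cast.mpr ha
  have h2 := rMDP_sq a
  rw [nuMDP_eq]
  cases x <;> simp only [lamMDP, if_true, if_false, Bool.false_eq_true] <;> nlinarith

lemma nuMDP_ne (ha : 1 ≤ a) (x : Bool) : nuMDP a x ≠ 0 := (nuMDP_pos ha x).ne'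

lemma lamMDP_ne (ha : 1 ≤ a) (x : Bool) : lamMDP a x ≠ 0 := by
  intro h
  exact nuMDP_ne ha x (by simp [nuMDP, h])

lemma nuMDP_eq' (a : ℕ) (x : Bool) :
    nuMDP a x = lamMDP a x * ((if x then 1 else -1) * Real.sqrt (4 * (a:ℝ) + 1)) := by
  cases x <;> simp only [nuMDP, lamMDP, if_true, if_false, Bool.false_eq_true] <;> ring

lemma term_eq (ha : 1 ≤ a) (x : Bool) (z : ℝ) :
    lamMDP a x * z / nuMDP a x =
      (if x then 1 else -1) * z / Real.sqrt (4 * (a:ℝ) + 1) := by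
  have hl := lamMDP_ne ha x
  have hr := rMDP_ne ha
  rw [nuMDP_eq']
  cases x <;> simp only [if_true, if_false, Bool.false_eq_true] <;> field_simp <;> ring

lemma key1 (ha : 1 ≤ a) (p q : Prop) [Decidable p] [Decidable q] :
    lamMDP a true * ((if p then 1 else lamMDP a true) * (if q then 1 else lamMDP a true)) /
        nuMDP a true +
      lamMDP a false * ((if p then 1 else lamMDP a false) * (if q then 1 else lamMDP a false)) /
        nuMDP a false =
      if p ∧ q then 0 else 1 := by
  have hr := rMDP_ne ha
  rw [term_eq ha, term_eq ha]
  by_cases hp : p <;> by_cases hq : q <;>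
    simp only [hp, hq, if_true, if_false, and_true, and_false, true_and, false_and,
      if_neg (fun h : False => h.elim)] <;>
    simp only [lamMDP, if_true, if_false, Bool.false_eq_true] <;>
    field_simp <;> ring

lemma key2 (ha : 1 ≤ a) (x y : Bool) :
    lamMDP a x * lamMDP a y + a = if x = y then nuMDP a x else 0 := by
  cases x <;> cases y <;>
    simp only [lamMDP, nuMDP, if_true, if_false, Bool.false_eq_true, Bool.true_eq_false,
      reduceIte] <;>
    linear_combination -(rMDP_sq a) / 4

lemma key3 (ha : 1 ≤ a) (x : Bool) (p : Prop) [Decidable p] :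
    (if p then 1 else lamMDP a x) * (if p then 1 else lamMDP a x) / nuMDP a x =
      wMDP a x p := by
  have hl := lamMDP_ne ha x
  have hr := rMDP_ne ha
  rw [nuMDP_eq', wMDP]
  by_cases hp : p <;> simp only [hp, if_true, if_false] <;>
    cases x <;> simp only [if_true, if_false, Bool.false_eq_true] <;> field_simp <;> ring

end Scalar

section Workhorse
variable {n : ℕ}

lemma fact_zero_outside {d p : ℕ} (hn : n ≠ 0) (hd : d ∣ n) (hp : p ∉ n.primeFactors) :
    d.factorization p = 0 := by
  by_cases hpp : p.Prime
  · refine Nat.factorization_eq_zero_of_not_dvd fun hpd => hp ?_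
    exact Nat.mem_primeFactors.mpr ⟨hpp, hpd.trans hd, hn⟩
  · exact Nat.factorization_eq_zero_of_not_prime _ hpp

lemma divisor_sum_prod (hn : n ≠ 0) (b c : {q : ℕ // q ∈ n.primeFactors} → ℝ) :
    ∑ d : {d : ℕ // d ∈ n.divisors}, ∏ i : {q : ℕ // q ∈ n.primeFactors},
      (if (i:ℕ) ∣ (d:ℕ) then b i else c i) =
    ∏ i : {q : ℕ // q ∈ n.primeFactors}, (c i + (n.factorization i) * b i) := by
  classical
  have hprime : ∀ i : {q : ℕ // q ∈ n.primeFactors}, (i:ℕ).Prime :=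
    fun i => Nat.prime_of_mem_primeFactors i.2
  have hd0 : ∀ d : {d : ℕ // d ∈ n.divisors}, (d:ℕ) ≠ 0 :=
    fun d => (Nat.pos_of_mem_divisors d.2).ne'
  have hddvd : ∀ d : {d : ℕ // d ∈ n.divisors}, (d:ℕ) ∣ n :=
    fun d => (Nat.mem_divisors.mp d.2).1
  -- the exponent map
  set e : {d : ℕ // d ∈ n.divisors} →
      (∀ i : {q : ℕ // q ∈ n.primeFactors}, Fin (n.factorization i + 1)) :=
    fun d i => ⟨(d:ℕ).factorization i, Nat.lt_succ_of_le <|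
      (Nat.factorization_le_iff_dvd (hd0 d) hn).mpr (hddvd d) i⟩ with he
  have hbij : Function.Bijective e := by
    constructor
    · intro d₁ d₂ h
      refine Subtype.ext (Nat.factorization_inj (hd0 d₁) (hd0 d₂) (Finsupp.ext fun p => ?_))
      by_cases hp : p ∈ n.primeFactors
      · have := congrFun h ⟨p, hp⟩
        simpa [he] using congrArg Fin.val this
      · rw [fact_zero_outside hn (hddvd d₁) hp, fact_zero_outside hn (hddvd d₂) hp]
    · intro t
      set N : ℕ := ∏ i : {q : ℕ // q ∈ n.primeFactors}, (i:ℕ) ^ ((t i : ℕ)) with hN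
      have hfacne : ∀ i ∈ (Finset.univ : Finset {q : ℕ // q ∈ n.primeFactors}),
          (i:ℕ) ^ ((t i : ℕ)) ≠ 0 :=
        fun i _ => pow_ne_zero _ (hprime i).pos.ne'
      have hN0 : N ≠ 0 := Finset.prod_ne_zero_iff.mpr hfacne
      have hfac : ∀ p : ℕ, N.factorization p =
          if h : p ∈ n.primeFactors then (t ⟨p, h⟩ : ℕ) else 0 := by
        intro p
        rw [hN, Nat.factorization_prod hfacne]
        rw [Finsupp.finset_sum_apply]
        have hterm : ∀ i : {q : ℕ // q ∈ n.primeFactors},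
            ((i:ℕ) ^ ((t i : ℕ))).factorization p =
              if (i:ℕ) = p then (t i : ℕ) else 0 := by
          intro i
          rw [(hprime i).factorization_pow, Finsupp.single_apply]
        by_cases hp : p ∈ n.primeFactors
        · rw [dif_pos hp, Finset.sum_eq_single ⟨p, hp⟩]
          · rw [hterm ⟨p, hp⟩, if_pos rfl]
          · intro i _ hne
            rw [hterm i, if_neg (fun h => hne (Subtype.ext h))]
          · intro h; exact absurd (Finset.mem_univ _) h
        · rw [dif_neg hp]
          refine Finset.sum_eq_zero fun i _ => ?_
          rw [hterm i, if_neg (fun h : (i:ℕ) = p => hp (h ▸ i.2))]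
      have hdvd : N ∣ n := by
        refine (Nat.factorization_le_iff_dvd hN0 hn).mp (Finsupp.le_def.mpr fun p => ?_)
        rw [hfac p]
        by_cases hp : p ∈ n.primeFactors
        · rw [dif_pos hp]
          exact Nat.lt_succ_iff.mp (t ⟨p, hp⟩).isLt
        · rw [dif_neg hp]; exact Nat.zero_le _
      refine ⟨⟨N, Nat.mem_divisors.mpr ⟨hdvd, hn⟩⟩, ?_⟩
      funext i
      refine Fin.ext ?_
      show N.factorization i = (t i : ℕ)
      rw [hfac i, dif_pos i.2]
  have hcompat : ∀ d : {d : ℕ // d ∈ n.divisors},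
      (∏ i : {q : ℕ // q ∈ n.primeFactors}, if (i:ℕ) ∣ (d:ℕ) then b i else c i) =
      (fun tt : ∀ i : {q : ℕ // q ∈ n.primeFactors}, Fin (n.factorization i + 1) =>
        ∏ i : {q : ℕ // q ∈ n.primeFactors}, if ((tt i : ℕ)) ≠ 0 then b i else c i) (e d) := by
    intro d
    refine Finset.prod_congr rfl fun i _ => ?_
    have : (i:ℕ) ∣ (d:ℕ) ↔ ((e d i : ℕ)) ≠ 0 := by
      rw [he]
      simp only []
      rw [(hprime i).dvd_iff_one_le_factorization (hd0 d)]
      omega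
    by_cases hdvd : (i:ℕ) ∣ (d:ℕ)
    · rw [if_pos hdvd, if_pos (this.mp hdvd)]
    · rw [if_neg hdvd, if_neg (fun h => hdvd (this.mpr h))]
  rw [Fintype.sum_bijective e hbij _
    (fun tt => ∏ i : {q : ℕ // q ∈ n.primeFactors}, if ((tt i : ℕ)) ≠ 0 then b i else c i)
    hcompat]
  rw [← Fintype.prod_sum
    (fun (i : {q : ℕ // q ∈ n.primeFactors}) (j : Fin (n.factorization i + 1)) =>
      if (j:ℕ) ≠ 0 then b i else c i)]
  refine Finset.prod_congr rfl fun i _ => ?_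
  rw [Fin.sum_univ_succ]
  simp only [Fin.val_zero, ne_eq, not_true_eq_false, if_false, Fin.val_succ]
  have : ∀ j : Fin (n.factorization i), (if ¬((j:ℕ) + 1 = 0) then b i else c i) = b i := by
    intro j; rw [if_pos (by omega)]
  rw [Finset.sum_congr rfl (fun j _ => this j), Finset.sum_const, Finset.card_univ,
    Fintype.card_fin, nsmul_eq_mul]
end Workhorse

section MatrixAux
open Matrix
variable {m : Type*} [Fintype m] [DecidableEq m] {ι : Type*} [Fintype ι] [DecidableEq ι]

lemma psd_smul_nonneg {M : Matrix m m ℝ} (hM : M.PosSemidef) {c : ℝ} (hc : 0 ≤ c) :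
    (c • M).PosSemidef := by
  refine Matrix.PosSemidef.of_dotProduct_mulVec_nonneg ?_ ?_
  · show (c • M)ᴴ = c • M
    rw [Matrix.conjTranspose_smul, star_trivial, hM.1]
  · intro x
    rw [Matrix.smul_mulVec, dotProduct_smul, smul_eq_mul]
    exact mul_nonneg hc (hM.dotProduct_mulVec_nonneg x)

lemma psd_sum {P : ι → Matrix m m ℝ} (h : ∀ x, (P x).PosSemidef) :
    (∑ x, P x).PosSemidef := by
  classical
  refine Finset.sum_induction P Matrix.PosSemidef (fun a b ha hb => ha.add hb)
    Matrix.PosSemidef.zero (fun x _ => h x)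

lemma smul_sum_sq {P : ι → Matrix m m ℝ}
    (hPP : ∀ x y, P x * P y = if x = y then P x else 0) (d d' : ι → ℝ) :
    (∑ x, d x • P x) * (∑ y, d' y • P y) = ∑ x, (d x * d' x) • P x := by
  rw [Finset.sum_mul_sum]
  refine Finset.sum_congr rfl fun x _ => ?_
  have hstep : ∀ y, (d x • P x) * (d' y • P y) =
      if x = y then (d x * d' y) • P x else 0 := by
    intro y
    rw [Matrix.smul_mul, Matrix.mul_smul, smul_smul, hPP, smul_ite, smul_zero]
  rw [Finset.sum_congr rfl fun y _ => hstep y, Finset.sum_ite_eq, if_pos (Finset.mem_univ x)]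

lemma diag_abs_eval (A B : Matrix m m ℝ) (c : ℝ) (hc : 0 ≤ c)
    (P : ι → Matrix m m ℝ) (lam : ι → ℝ)
    (hPsd : ∀ x, (P x).PosSemidef)
    (hPP : ∀ x y, P x * P y = if x = y then P x else 0)
    (hAP : A = ∑ x, lam x • P x)
    (hB : B.PosSemidef)
    (hBsq : B ^ 2 = (A - c • 1) ^ 2)
    (v : m) :
    B v v = c * (1 - ∑ x, P x v v) + ∑ x, |lam x - c| * (P x v v) := by
  classical
  set S : Matrix m m ℝ := ∑ x, P x with hS
  set C : Matrix m m ℝ := c • ((1 : Matrix m m ℝ) - S) + ∑ x, |lam x - c| • P x with hC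
  have hSform : S = ∑ x, (1:ℝ) • P x := by simp [hS]
  have hS2 : S * S = S := by
    rw [hSform, smul_sum_sq hPP]; simp
  have hSsym : Sᴴ = S := by
    rw [hS, Matrix.conjTranspose_sum]
    exact Finset.sum_congr rfl fun x _ => (hPsd x).1
  -- C is positive semidefinite
  have hQpsd : ((1 : Matrix m m ℝ) - S).PosSemidef := by
    have hQsym : ((1 : Matrix m m ℝ) - S)ᴴ = 1 - S := by
      rw [Matrix.conjTranspose_sub, hSsym, Matrix.conjTranspose_one]
    have hQ2 : ((1 : Matrix m m ℝ) - S) * ((1 : Matrix m m ℝ) - S) = 1 - S := by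
      rw [sub_mul, one_mul, mul_sub, mul_one, hS2]; abel
    have := Matrix.posSemidef_conjTranspose_mul_self ((1 : Matrix m m ℝ) - S)
    rwa [hQsym, hQ2] at this
  have hCpsd : C.PosSemidef := by
    refine (psd_smul_nonneg hQpsd hc).add (psd_sum fun x => ?_)
    exact psd_smul_nonneg (hPsd x) (abs_nonneg _)
  -- rewrite C in "c • 1 + ∑" form
  have hCform : C = c • (1 : Matrix m m ℝ) + ∑ x, (|lam x - c| - c) • P x := by
    rw [hC, smul_sub]
    have : ∀ x ∈ (Finset.univ : Finset ι),
        (|lam x - c| - c) • P x = |lam x - c| • P x - c • P x :=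
      fun x _ => sub_smul _ _ _
    rw [Finset.sum_congr rfl this, Finset.sum_sub_distrib, hS, Finset.smul_sum]
    abel
  -- C ^ 2 = (A - c • 1) ^ 2
  have hsq : ∀ (e : ℝ) (d : ι → ℝ), (e • (1 : Matrix m m ℝ) + ∑ x, d x • P x) ^ 2 =
      (e * e) • (1 : Matrix m m ℝ) + ∑ x, (2 * e * d x + d x * d x) • P x := by
    intro e d
    rw [pow_two, mul_add, add_mul, add_mul, smul_sum_sq hPP, smul_mul_assoc, smul_mul_assoc,
      one_mul, one_mul, mul_smul_comm, mul_one, smul_smul]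
    rw [Finset.smul_sum]
    simp only [smul_smul]
    have hterm : ∀ x ∈ (Finset.univ : Finset ι),
        (2 * e * d x + d x * d x) • P x =
          (e * d x) • P x + ((e * d x) • P x + (d x * d x) • P x) := fun x _ => by module
    rw [Finset.sum_congr rfl hterm, Finset.sum_add_distrib, Finset.sum_add_distrib, add_assoc]
  have hMform : A - c • (1 : Matrix m m ℝ) =
      (-c) • (1 : Matrix m m ℝ) + ∑ x, lam x • P x := by
    rw [hAP, neg_smul]; abel
  have hC2 : C ^ 2 = (A - c • 1) ^ 2 := by
    rw [hCform, hMform, hsq, hsq]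
    congr 1
    · congr 1; ring
    · refine Finset.sum_congr rfl fun x _ => ?_
      congr 1
      linear_combination abs_mul_abs_self (lam x - c)
  -- B = C
  have hBC : B = C := by
    open scoped MatrixOrder in
    exact (CFC.sq_eq_sq_iff B C hB.nonneg hCpsd.nonneg).mp (hBsq.trans hC2.symm)
  rw [hBC, hC]
  simp only [Matrix.add_apply, Matrix.smul_apply, Matrix.sub_apply, Matrix.one_apply_eq,
    Matrix.sum_apply, smul_eq_mul]
  congr 1
  · rw [hS, Matrix.sum_apply]
end MatrixAux

open Matrix in
/-- The vertex energy of each divisor `v` of `n` in the modified divisor prime graph of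
`n`: if `B` is positive semidefinite with `B² = (A - (1/τ(n))I)²`, then the diagonal
entry of `B` at `v` equals
`(1/τ(n)) (1 - ∑_{x ∈ {1,2}^k} ∏ᵢ w_{v,xᵢ}^{(i)}) +
  ∑_{x ∈ {1,2}^k} |∏ᵢ λ_{xᵢ}^{(i)} - 1/τ(n)| ∏ᵢ w_{v,xᵢ}^{(i)}`. -/
theorem vertexEnergy_modifiedDivisorPrimeGraph (n : ℕ) (hn : 1 < n)
    (A B : Matrix {d : ℕ // d ∈ n.divisors} {d : ℕ // d ∈ n.divisors} ℝ)
    (hA : ∀ u v : {d : ℕ // d ∈ n.divisors},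
      A u v = if Nat.gcd u.1 v.1 = 1 then 1 else 0)
    (hB : B.PosSemidef)
    (hBsq : B ^ 2 = (A - (1 / (n.divisors.card : ℝ)) • 1) ^ 2)
    (v : {d : ℕ // d ∈ n.divisors}) :
    B v v =
      (1 / (n.divisors.card : ℝ)) *
          (1 - ∑ x : {q : ℕ // q ∈ n.primeFactors} → Bool,
                ∏ i : {q : ℕ // q ∈ n.primeFactors},
                  wMDP (n.factorization i.1) (x i) (i.1 ∣ v.1)) +
        ∑ x : {q : ℕ // q ∈ n.primeFactors} → Bool,
          |(∏ i : {q : ℕ // q ∈ n.primeFactors}, lamMDP (n.factorization i.1) (x i)) -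
              1 / (n.divisors.card : ℝ)| *
            ∏ i : {q : ℕ // q ∈ n.primeFactors},
              wMDP (n.factorization i.1) (x i) (i.1 ∣ v.1) := by
  classical
  have hn0 : n ≠ 0 := by omega
  have ha : ∀ i : {q : ℕ // q ∈ n.primeFactors}, 1 ≤ n.factorization i.1 := by
    intro i
    have hs : i.1 ∈ n.factorization.support := by
      rw [Nat.support_factorization]; exact i.2
    exact Nat.one_le_iff_ne_zero.mpr (Finsupp.mem_support_iff.mp hs)
  have hprime : ∀ i : {q : ℕ // q ∈ n.primeFactors}, (i.1).Prime :=
    fun i => Nat.prime_of_mem_primeFactors i.2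
  set c : ℝ := 1 / (n.divisors.card : ℝ) with hc_def
  have hc : 0 ≤ c := by positivity
  -- eigen data
  set g : ({q : ℕ // q ∈ n.primeFactors} → Bool) → {d : ℕ // d ∈ n.divisors} → ℝ :=
    fun x d => ∏ i : {q : ℕ // q ∈ n.primeFactors},
      (if i.1 ∣ d.1 then (1:ℝ) else lamMDP (n.factorization i.1) (x i)) with hg
  set ν : ({q : ℕ // q ∈ n.primeFactors} → Bool) → ℝ :=
    fun x => ∏ i : {q : ℕ // q ∈ n.primeFactors}, nuMDP (n.factorization i.1) (x i) with hν
  set P : ({q : ℕ // q ∈ n.primeFactors} → Bool) →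
      Matrix {d : ℕ // d ∈ n.divisors} {d : ℕ // d ∈ n.divisors} ℝ :=
    fun x => Matrix.of fun u w => g x u * g x w / ν x with hP
  have hν_pos : ∀ x, 0 < ν x :=
    fun x => Finset.prod_pos fun i _ => nuMDP_pos (ha i) (x i)
  have hPapp : ∀ x u w, P x u w = g x u * g x w / ν x := fun x u w => rfl
  -- inner products of the eigenvectors
  have hdot : ∀ x y, (∑ d : {d : ℕ // d ∈ n.divisors}, g x d * g y d) =
      if x = y then ν x else 0 := by
    intro x y
    have h1 : ∀ d : {d : ℕ // d ∈ n.divisors}, g x d * g y d =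
        ∏ i : {q : ℕ // q ∈ n.primeFactors},
          (if i.1 ∣ d.1 then (1:ℝ)
           else lamMDP (n.factorization i.1) (x i) * lamMDP (n.factorization i.1) (y i)) := by
      intro d
      rw [hg]
      simp only []
      rw [← Finset.prod_mul_distrib]
      refine Finset.prod_congr rfl fun i _ => ?_
      by_cases hd : i.1 ∣ d.1 <;> simp [hd]
    rw [Finset.sum_congr rfl fun d _ => h1 d,
      divisor_sum_prod hn0 (fun _ => (1:ℝ))
        (fun i => lamMDP (n.factorization i.1) (x i) * lamMDP (n.factorization i.1) (y i))]
    have h2 : ∀ i ∈ (Finset.univ : Finset {q : ℕ // q ∈ n.primeFactors}),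
        (lamMDP (n.factorization i.1) (x i) * lamMDP (n.factorization i.1) (y i) +
          (n.factorization i.1 : ℝ) * 1) =
        (if x i = y i then nuMDP (n.factorization i.1) (x i) else 0) := by
      intro i _
      rw [mul_one]
      exact key2 (ha i) (x i) (y i)
    rw [Finset.prod_congr rfl h2]
    by_cases hxy : x = y
    · subst hxy
      rw [if_pos rfl, hν]
      exact Finset.prod_congr rfl fun i _ => if_pos rfl
    · rw [if_neg hxy]
      obtain ⟨i, hi⟩ := Function.ne_iff.mp hxy
      exact Finset.prod_eq_zero (Finset.mem_univ i) (if_neg hi)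
  -- positive semidefiniteness of P x
  have hPsd : ∀ x, (P x).PosSemidef := by
    intro x
    refine Matrix.PosSemidef.of_dotProduct_mulVec_nonneg ?_ ?_
    · show (P x)ᴴ = P x
      ext u w
      simp only [Matrix.conjTranspose_apply, hPapp, star_trivial]
      ring
    · intro z
      have hmv : ∀ u, (P x).mulVec z u =
          g x u * (∑ w : {d : ℕ // d ∈ n.divisors}, g x w * z w) / ν x := by
        intro u
        show (∑ w, P x u w * z w) = _
        calc (∑ w, P x u w * z w)
            = ∑ w, (g x u / ν x) * (g x w * z w) :=
              Finset.sum_congr rfl fun w _ => by rw [hPapp]; ring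
          _ = (g x u / ν x) * ∑ w, (g x w * z w) := (Finset.mul_sum _ _ _).symm
          _ = _ := by ring
      have hdp : dotProduct (star z) ((P x).mulVec z) =
          (∑ w : {d : ℕ // d ∈ n.divisors}, g x w * z w) ^ 2 / ν x := by
        show (∑ u, (star z) u * ((P x).mulVec z) u) = _
        calc (∑ u, (star z) u * ((P x).mulVec z) u)
            = ∑ u, (g x u * z u) *
                (∑ w : {d : ℕ // d ∈ n.divisors}, g x w * z w) / ν x :=
              Finset.sum_congr rfl fun u _ => by
                rw [hmv]; simp only [Pi.star_apply, star_trivial]; ring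
          _ = (∑ u, (g x u * z u) * (∑ w : {d : ℕ // d ∈ n.divisors}, g x w * z w)) / ν x :=
              (Finset.sum_div _ _ _).symm
          _ = (∑ u : {d : ℕ // d ∈ n.divisors}, g x u * z u) *
                (∑ w : {d : ℕ // d ∈ n.divisors}, g x w * z w) / ν x := by
              rw [← Finset.sum_mul]
          _ = _ := by rw [pow_two]
      rw [hdp]
      exact div_nonneg (sq_nonneg _) (hν_pos x).le
  -- orthogonality of the projectors
  have hPP : ∀ x y, P x * P y = if x = y then P x else 0 := by
    intro x y
    have h1 : ∀ u w, ∀ d ∈ (Finset.univ : Finset {d : ℕ // d ∈ n.divisors}),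
        P x u d * P y d w = (g x u * g y w / (ν x * ν y)) * (g x d * g y d) :=
      fun u w d _ => by rw [hPapp, hPapp]; ring
    by_cases hxy : x = y
    · subst hxy
      rw [if_pos rfl]
      ext u w
      rw [Matrix.mul_apply, Finset.sum_congr rfl (h1 u w), ← Finset.mul_sum, hdot,
        if_pos rfl, hPapp]
      field_simp [(hν_pos x).ne']
    · rw [if_neg hxy]
      ext u w
      rw [Matrix.mul_apply, Finset.sum_congr rfl (h1 u w), ← Finset.mul_sum, hdot,
        if_neg hxy, mul_zero]
      rfl
  -- spectral decomposition of A
  have hAP : A = ∑ x : ({q : ℕ // q ∈ n.primeFactors} → Bool),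
      (∏ i : {q : ℕ // q ∈ n.primeFactors}, lamMDP (n.factorization i.1) (x i)) • P x := by
    ext u w
    rw [hA u w, Matrix.sum_apply]
    have h1 : ∀ x ∈ (Finset.univ : Finset ({q : ℕ // q ∈ n.primeFactors} → Bool)),
        ((∏ i : {q : ℕ // q ∈ n.primeFactors}, lamMDP (n.factorization i.1) (x i)) • P x) u w =
        ∏ i : {q : ℕ // q ∈ n.primeFactors},
          (lamMDP (n.factorization i.1) (x i) *
            ((if i.1 ∣ u.1 then (1:ℝ) else lamMDP (n.factorization i.1) (x i)) *
             (if i.1 ∣ w.1 then (1:ℝ) else lamMDP (n.factorization i.1) (x i))) /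
            nuMDP (n.factorization i.1) (x i)) := by
      intro x _
      rw [Matrix.smul_apply, smul_eq_mul, hPapp, hg, hν]
      simp only []
      rw [Finset.prod_div_distrib, Finset.prod_mul_distrib, Finset.prod_mul_distrib]
      ring
    rw [Finset.sum_congr rfl h1, ← Fintype.prod_sum
      (fun (i : {q : ℕ // q ∈ n.primeFactors}) (b : Bool) =>
        lamMDP (n.factorization i.1) b *
          ((if i.1 ∣ u.1 then (1:ℝ) else lamMDP (n.factorization i.1) b) *
           (if i.1 ∣ w.1 then (1:ℝ) else lamMDP (n.factorization i.1) b)) /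
          nuMDP (n.factorization i.1) b)]
    have h2 : ∀ i ∈ (Finset.univ : Finset {q : ℕ // q ∈ n.primeFactors}),
        (∑ b : Bool, (lamMDP (n.factorization i.1) b *
            ((if i.1 ∣ u.1 then (1:ℝ) else lamMDP (n.factorization i.1) b) *
             (if i.1 ∣ w.1 then (1:ℝ) else lamMDP (n.factorization i.1) b)) /
            nuMDP (n.factorization i.1) b)) =
        (if i.1 ∣ u.1 ∧ i.1 ∣ w.1 then (0:ℝ) else 1) := by
      intro i _
      rw [Fintype.sum_bool]
      exact key1 (ha i) _ _
    rw [Finset.prod_congr rfl h2]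
    by_cases hgcd : Nat.gcd u.1 w.1 = 1
    · rw [if_pos hgcd]
      refine (Finset.prod_eq_one fun i _ => ?_).symm
      refine if_neg fun hdvd => ?_
      have h3 : i.1 ∣ Nat.gcd u.1 w.1 := Nat.dvd_gcd hdvd.1 hdvd.2
      rw [hgcd] at h3
      exact (hprime i).one_lt.ne' (Nat.dvd_one.mp h3)
    · rw [if_neg hgcd]
      obtain ⟨p, hpp, hpd⟩ := Nat.exists_prime_and_dvd hgcd
      have hpu : p ∣ u.1 := hpd.trans (Nat.gcd_dvd_left _ _)
      have hpw : p ∣ w.1 := hpd.trans (Nat.gcd_dvd_right _ _)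
      have hpn : p ∈ n.primeFactors :=
        Nat.mem_primeFactors.mpr ⟨hpp, hpu.trans (Nat.mem_divisors.mp u.2).1, hn0⟩
      refine (Finset.prod_eq_zero
        (Finset.mem_univ (⟨p, hpn⟩ : {q : ℕ // q ∈ n.primeFactors})) ?_).symm
      exact if_pos ⟨hpu, hpw⟩
  -- evaluate the diagonal
  have hdiag : ∀ x, P x v v =
      ∏ i : {q : ℕ // q ∈ n.primeFactors}, wMDP (n.factorization i.1) (x i) (i.1 ∣ v.1) := by
    intro x
    rw [hPapp, hg, hν]
    simp only []
    rw [← Finset.prod_mul_distrib, ← Finset.prod_div_distrib]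
    exact Finset.prod_congr rfl fun i _ => key3 (ha i) (x i) _
  have main := diag_abs_eval A B c hc P
    (fun x => ∏ i : {q : ℕ // q ∈ n.primeFactors}, lamMDP (n.factorization i.1) (x i))
    hPsd hPP hAP hB hBsq v
  rw [main]
  have hs1 : (∑ x : ({q : ℕ // q ∈ n.primeFactors} → Bool), P x v v) =
      ∑ x : ({q : ℕ // q ∈ n.primeFactors} → Bool),
        ∏ i : {q : ℕ // q ∈ n.primeFactors}, wMDP (n.factorization i.1) (x i) (i.1 ∣ v.1) :=
    Finset.sum_congr rfl fun x _ => hdiag x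
  have hs2 : (∑ x : ({q : ℕ // q ∈ n.primeFactors} → Bool),
      |(∏ i : {q : ℕ // q ∈ n.primeFactors}, lamMDP (n.factorization i.1) (x i)) - c| *
        P x v v) =
      ∑ x : ({q : ℕ // q ∈ n.primeFactors} → Bool),
        |(∏ i : {q : ℕ // q ∈ n.primeFactors}, lamMDP (n.factorization i.1) (x i)) - c| *
          ∏ i : {q : ℕ // q ∈ n.primeFactors}, wMDP (n.factorization i.1) (x i) (i.1 ∣ v.1) :=
    Finset.sum_congr rfl fun x _ => by rw [hdiag x]
  rw [hs1, hs2]
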